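/- arXiv:1511.03723 — 3 statements merged into one kernel-verified Lean document; each statement's English description precedes it below -/
import Mathlib

section
/- Let V be a complex Hilbert space and let B₀, B₁ be bounded Hermitian coercive sesquilinear forms on V with B₁[u,u] ≤ B₀[u,u] for all u ∈ V. Let G₀, G₁ : V⋆ → V be the corresponding Lax–Milgram solution operators. Then f(G₁f) ≥ f(G₀f) for every f ∈ V⋆ (both sides being real numbers). -/
open scoped ComplexConjugate

/-- Abstract Lemma 7: if `B₁ ≤ B₀` on the diagonal, then the corresponding Lax–Milgram
solution operators satisfy `f(G₁f) ≥ f(G₀f)` for every antilinear functional `f`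
(both sides being real). -/
theorem lax_milgram_pairing_monotone
    {V : Type*} [NormedAddCommGroup V] [InnerProductSpace ℂ V] [CompleteSpace V]
    (B₀ B₁ : V → V → ℂ)
    (hB₀_add : ∀ u v w : V, B₀ (u + v) w = B₀ u w + B₀ v w)
    (hB₀_smul : ∀ (a : ℂ) (u w : V), B₀ (a • u) w = a * B₀ u w)
    (hB₀_herm : ∀ u v : V, B₀ u v = conj (B₀ v u))
    (hB₀_bdd : ∃ C : ℝ, ∀ u v : V, ‖B₀ u v‖ ≤ C * ‖u‖ * ‖v‖)
    (hB₀_coer : ∃ m : ℝ, 0 < m ∧ ∀ u : V, m * ‖u‖ ^ 2 ≤ (B₀ u u).re)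
    (hB₁_add : ∀ u v w : V, B₁ (u + v) w = B₁ u w + B₁ v w)
    (hB₁_smul : ∀ (a : ℂ) (u w : V), B₁ (a • u) w = a * B₁ u w)
    (hB₁_herm : ∀ u v : V, B₁ u v = conj (B₁ v u))
    (hB₁_bdd : ∃ C : ℝ, ∀ u v : V, ‖B₁ u v‖ ≤ C * ‖u‖ * ‖v‖)
    (hB₁_coer : ∃ m : ℝ, 0 < m ∧ ∀ u : V, m * ‖u‖ ^ 2 ≤ (B₁ u u).re)
    (hle : ∀ u : V, (B₁ u u).re ≤ (B₀ u u).re)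
    (G₀ G₁ : (V →L⋆[ℂ] ℂ) →L[ℂ] V)
    (hG₀ : ∀ (f : V →L⋆[ℂ] ℂ) (φ : V), B₀ (G₀ f) φ = f φ)
    (hG₁ : ∀ (f : V →L⋆[ℂ] ℂ) (φ : V), B₁ (G₁ f) φ = f φ) :
    ∀ f : V →L⋆[ℂ] ℂ,
      (f (G₀ f)).im = 0 ∧ (f (G₁ f)).im = 0 ∧ (f (G₀ f)).re ≤ (f (G₁ f)).re := by

  intro f
  set u := G₀ f with hu
  set v := G₁ f with hv
  have hfu : f u = B₀ u u := (hG₀ f u).symm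
  have hfv : f v = B₁ v v := (hG₁ f v).symm
  have hB₁vu : B₁ v u = f u := hG₁ f u
  -- Hermitian diagonal is real
  have him : ∀ (B : V → V → ℂ), (∀ x y : V, B x y = conj (B y x)) → ∀ x : V, (B x x).im = 0 := by
    intro B hB x
    have := congrArg Complex.im (hB x x)
    simp at this
    linarith
  have him0 := him B₀ hB₀_herm u
  have him1 := him B₁ hB₁_herm v
  refine ⟨by rw [hfu]; exact him0, by rw [hfv]; exact him1, ?_⟩
  -- second argument additivity / smul for B₁
  have add2 : ∀ w x y : V, B₁ w (x + y) = B₁ w x + B₁ w y := by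
    intro w x y
    rw [hB₁_herm, hB₁_add, map_add, ← hB₁_herm, ← hB₁_herm]
  have smul2 : ∀ (a : ℂ) (w x : V), B₁ w (a • x) = conj a * B₁ w x := by
    intro a w x
    rw [hB₁_herm, hB₁_smul, map_mul, ← hB₁_herm]
  obtain ⟨m, hm, hcoer⟩ := hB₁_coer
  have hpos : 0 ≤ (B₁ (v - u) (v - u)).re := by
    refine le_trans ?_ (hcoer (v - u))
    positivity
  have hsub : v - u = v + (-1 : ℂ) • u := by
    simp [sub_eq_add_neg]
  have hexp : B₁ (v - u) (v - u) = B₁ v v - B₁ v u - B₁ u v + B₁ u u := by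
    have hneg : ∀ x y : V, B₁ (-x) y = -B₁ x y := by
      intro x y
      rw [show (-x : V) = (-1 : ℂ) • x by simp, hB₁_smul]
      ring
    rw [hsub, hB₁_add, add2, add2, smul2, smul2, hB₁_smul]
    ring_nf
    simp [hneg]
    ring
  have huv : (B₁ u v).re = (B₁ v u).re := by
    rw [hB₁_herm]; simp
  have hre : 0 ≤ (B₁ v v).re - 2 * (B₁ v u).re + (B₁ u u).re := by
    have := hpos
    rw [hexp] at this
    simp only [Complex.add_re, Complex.sub_re] at this
    linarith [huv]
  have h1 : (B₁ u u).re ≤ (B₀ u u).re := hle u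
  have h2 : (B₁ v u).re = (f u).re := by rw [hB₁vu]
  have h3 : (B₀ u u).re = (f u).re := by rw [← hfu]
  rw [hfv]
  linarith
end

section
/- Let H be a nonzero complex Hilbert space and G a bounded self-adjoint operator on H which is nonnegative (⟨Gw, w⟩ ≥ 0 for all w) and injective, and whose spectrum satisfies σ(G) ∩ (a, b) = ∅ for some 0 < a < b. Let a < μ̃ < μ < b. Then G − μ·I and G − μ̃·I are invertible, and the operator T := G²((G − μ)⁻¹ − (G − μ̃)⁻¹), which equals (μ − μ̃)·G²(G − μ)⁻¹(G − μ̃)⁻¹, satisfies ⟨Tw, w⟩ > 0 for every w ≠ 0. -/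
open scoped InnerProductSpace

/-- Operator-theoretic core of the monotonicity part of Lemma 12: for a nonnegative,
injective, bounded self-adjoint operator `G` whose spectrum avoids `(a,b)` with
`0 < a < b`, and `a < μ̃ < μ < b`, the operators `G − μ` and `G − μ̃` are invertible and
`T = G²((G−μ)⁻¹ − (G−μ̃)⁻¹) = (μ−μ̃)G²(G−μ)⁻¹(G−μ̃)⁻¹` satisfies `⟨Tw,w⟩ > 0` for `w ≠ 0`. -/
theorem resolvent_difference_positive
    {H : Type*} [NormedAddCommGroup H] [InnerProductSpace ℂ H] [CompleteSpace H]
    [Nontrivial H]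
    (G : H →L[ℂ] H) (hsa : IsSelfAdjoint G)
    (hpos : ∀ w : H, 0 ≤ (⟪G w, w⟫_ℂ).re)
    (hinj : Function.Injective ⇑G)
    (a b : ℝ) (ha : 0 < a) (hab : a < b)
    (hgap : ∀ x : ℝ, x ∈ Set.Ioo a b → (x : ℂ) ∉ spectrum ℂ G)
    (μ μ' : ℝ) (hμ'₁ : a < μ') (hμ'₂ : μ' < μ) (hμ : μ < b) :
    IsUnit (G - (μ : ℂ) • (1 : H →L[ℂ] H)) ∧
    IsUnit (G - (μ' : ℂ) • (1 : H →L[ℂ] H)) ∧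
    G ^ 2 * (Ring.inverse (G - (μ : ℂ) • 1) - Ring.inverse (G - (μ' : ℂ) • 1)) =
      ((μ : ℂ) - (μ' : ℂ)) •
        (G ^ 2 * Ring.inverse (G - (μ : ℂ) • 1) * Ring.inverse (G - (μ' : ℂ) • 1)) ∧
    ∀ w : H, w ≠ 0 →
      0 < (⟪(G ^ 2 *
        (Ring.inverse (G - (μ : ℂ) • 1) - Ring.inverse (G - (μ' : ℂ) • 1))) w, w⟫_ℂ).re := by
  -- invertibility from the spectral gap
  have hunit : ∀ t : ℝ, t ∈ Set.Ioo a b → IsUnit (G - (t : ℂ) • (1 : H →L[ℂ] H)) := by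
    intro t ht
    have h := (spectrum.notMem_iff).mp (hgap t ht)
    have h' := h.neg
    rwa [neg_sub, Algebra.algebraMap_eq_smul_one] at h'
  have hμmem : μ ∈ Set.Ioo a b := ⟨hμ'₁.trans hμ'₂, hμ⟩
  have hμ'mem : μ' ∈ Set.Ioo a b := ⟨hμ'₁, hμ'₂.trans hμ⟩
  set A : H →L[ℂ] H := G - (μ : ℂ) • 1 with hAdef
  set B : H →L[ℂ] H := G - (μ' : ℂ) • 1 with hBdef
  have hA : IsUnit A := hunit μ hμmem
  have hB : IsUnit B := hunit μ' hμ'mem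
  -- commutation
  have hGA : Commute G A := (Commute.refl G).sub_right ((Commute.one_right G).smul_right _)
  have hGB : Commute G B := (Commute.refl G).sub_right ((Commute.one_right G).smul_right _)
  have hABc : Commute A B :=
    hGB.sub_left (((Commute.one_left G).smul_left _).sub_right
      (((Commute.refl (1 : H →L[ℂ] H)).smul_left _).smul_right _))
  -- resolvent identity
  have hBA : B - A = ((μ : ℂ) - (μ' : ℂ)) • (1 : H →L[ℂ] H) := by
    rw [hAdef, hBdef, sub_sub_sub_cancel_left, ← sub_smul]
  have hid : Ring.inverse A - Ring.inverse B
      = ((μ : ℂ) - (μ' : ℂ)) • (Ring.inverse A * Ring.inverse B) := by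
    have h1 : Ring.inverse A * A = 1 := Ring.inverse_mul_cancel _ hA
    have h2 : B * Ring.inverse B = 1 := Ring.mul_inverse_cancel _ hB
    calc Ring.inverse A - Ring.inverse B
        = Ring.inverse A * (B * Ring.inverse B) - (Ring.inverse A * A) * Ring.inverse B := by
          rw [h1, h2, mul_one, one_mul]
      _ = Ring.inverse A * ((B - A) * Ring.inverse B) := by noncomm_ring
      _ = ((μ : ℂ) - (μ' : ℂ)) • (Ring.inverse A * Ring.inverse B) := by
          rw [hBA, smul_mul_assoc, one_mul, mul_smul_comm]
  have hmain : G ^ 2 * (Ring.inverse A - Ring.inverse B)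
      = ((μ : ℂ) - (μ' : ℂ)) • (G ^ 2 * Ring.inverse A * Ring.inverse B) := by
    rw [hid, mul_smul_comm, mul_assoc]
  refine ⟨hA, hB, hmain, ?_⟩
  -- positivity
  set c : ℝ := min ((μ - a) * (μ' - a)) ((b - μ) * (b - μ')) with hcdef
  have hc : 0 < c := lt_min (by nlinarith) (by nlinarith)
  have hrsa : ∀ t : ℝ, IsSelfAdjoint ((t : ℂ) • (1 : H →L[ℂ] H)) := fun t => by
    rw [IsSelfAdjoint, star_smul, star_one, Complex.star_def, Complex.conj_ofReal]
  have hAsa : IsSelfAdjoint A := hsa.sub (hrsa μ)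
  have hBsa : IsSelfAdjoint B := hsa.sub (hrsa μ')
  have hABsa : IsSelfAdjoint (A * B) := by
    rw [IsSelfAdjoint, star_mul, hAsa.star_eq, hBsa.star_eq]
    exact hABc.eq.symm
  have hQsa : IsSelfAdjoint (A * B - (c : ℂ) • 1) := hABsa.sub (hrsa c)
  have hGpos : (0 : H →L[ℂ] H) ≤ G :=
    (ContinuousLinearMap.nonneg_iff_isPositive G).mpr ⟨hsa.isSymmetric, fun x => hpos x⟩
  have hspec : spectrum ℂ (A * B - (c : ℂ) • 1)
      = (fun z : ℂ => (z - μ) * (z - μ') - c) '' spectrum ℂ G := by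
    have heq : A * B - (c : ℂ) • 1 = Polynomial.aeval G
        ((Polynomial.X - Polynomial.C (μ : ℂ)) * (Polynomial.X - Polynomial.C (μ' : ℂ))
          - Polynomial.C (c : ℂ)) := by
      simp [hAdef, hBdef, Algebra.algebraMap_eq_smul_one]
    rw [heq, spectrum.map_polynomial_aeval]
    congr 1
    ext z
    simp
  have hQnn : (0 : H →L[ℂ] H) ≤ A * B - (c : ℂ) • 1 := by
    rw [StarOrderedRing.nonneg_iff_spectrum_nonneg (R := ℝ) _ hQsa]
    intro x hx
    have hx' : (x : ℂ) ∈ spectrum ℂ (A * B - (c : ℂ) • 1) := by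
      have := spectrum.algebraMap_mem ℂ hx
      simpa using this
    rw [hspec] at hx'
    obtain ⟨z, hz, hzx⟩ := hx'
    have hzre : z = z.re := hsa.mem_spectrum_eq_re hz
    set t := z.re with htdef
    have hzt : ((t : ℝ) : ℂ) ∈ spectrum ℂ G := hzre ▸ hz
    have htnn : 0 ≤ t := by
      have ht' : t ∈ spectrum ℝ G := by
        apply spectrum.of_algebraMap_mem ℂ
        simpa using hzt
      exact spectrum_nonneg_of_nonneg hGpos ht'
    have htgap : t ∉ Set.Ioo a b := fun h => hgap t h hzt
    have hxeq : (t - μ) * (t - μ') - c = x := by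
      rw [hzre] at hzx
      have hzx' : ((t : ℂ) - μ) * ((t : ℂ) - μ') - c = (x : ℂ) := hzx
      exact_mod_cast hzx'
    have htab : t ≤ a ∨ b ≤ t := by
      by_contra hcon
      push_neg at hcon
      exact htgap hcon
    rcases htab with h | h
    · nlinarith [min_le_left ((μ - a) * (μ' - a)) ((b - μ) * (b - μ'))]
    · nlinarith [min_le_right ((μ - a) * (μ' - a)) ((b - μ) * (b - μ'))]
  have hQpos := (ContinuousLinearMap.nonneg_iff_isPositive _).mp hQnn
  have hkey : ∀ v : H, c * ‖v‖ ^ 2 ≤ (⟪(A * B) v, v⟫_ℂ).re := by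
    intro v
    have h0 := hQpos.2 v
    rw [ContinuousLinearMap.reApplyInnerSelf_apply] at h0
    have hsub : ((A * B - (c : ℂ) • 1) v) = (A * B) v - (c : ℂ) • v := by
      simp
    rw [hsub, inner_sub_left, inner_smul_left] at h0
    have h0' : (0 : ℝ) ≤ ((⟪(A * B) v, v⟫_ℂ) - (starRingEnd ℂ) (c : ℂ) * ⟪v, v⟫_ℂ).re := h0
    have hns : (⟪v, v⟫_ℂ).re = ‖v‖ ^ 2 := by
      simpa using inner_self_eq_norm_sq (𝕜 := ℂ) (x := v)
    simp only [Complex.sub_re, Complex.conj_ofReal, Complex.re_ofReal_mul, hns] at h0'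
    linarith
  intro w hw
  set v : H := Ring.inverse A (Ring.inverse B w) with hvdef
  have hApp : (G ^ 2 * (Ring.inverse A - Ring.inverse B)) w
      = ((μ : ℂ) - (μ' : ℂ)) • (G (G v)) := by
    rw [hmain]
    simp only [ContinuousLinearMap.smul_apply, ContinuousLinearMap.mul_apply, pow_two, hvdef]
  have hAvapp : A v = Ring.inverse B w := by
    rw [hvdef, ← ContinuousLinearMap.mul_apply, Ring.mul_inverse_cancel _ hA,
      ContinuousLinearMap.one_apply]
  have hBapp : B (Ring.inverse B w) = w := by
    rw [← ContinuousLinearMap.mul_apply, Ring.mul_inverse_cancel _ hB,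
      ContinuousLinearMap.one_apply]
  have hwv : w = (A * B) v := by
    rw [hABc.eq]
    calc w = B (A v) := by rw [hAvapp, hBapp]
      _ = (B * A) v := rfl
  have hv0 : v ≠ 0 := by
    intro h
    apply hw
    rw [hwv, h, map_zero]
  have hGv0 : G v ≠ 0 := by
    intro h
    exact hv0 (hinj (by simpa using h))
  have hcommS : (A * B) (G (G v)) = G ((A * B) (G v)) := by
    have hGS : Commute G (A * B) := hGA.mul_right hGB
    calc (A * B) (G (G v)) = ((A * B) * G) (G v) := rfl
      _ = (G * (A * B)) (G v) := by rw [hGS.eq]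
      _ = G ((A * B) (G v)) := rfl
  have hTw : ⟪(G ^ 2 * (Ring.inverse A - Ring.inverse B)) w, w⟫_ℂ
      = ((μ : ℂ) - (μ' : ℂ)) * ⟪(A * B) (G v), G v⟫_ℂ := by
    rw [hApp, inner_smul_left]
    congr 1
    · simp [Complex.conj_ofReal]
    · calc ⟪G (G v), w⟫_ℂ = ⟪G (G v), (A * B) v⟫_ℂ := by rw [← hwv]
        _ = ⟪(A * B) (G (G v)), v⟫_ℂ := (hABsa.isSymmetric _ _).symm
        _ = ⟪G ((A * B) (G v)), v⟫_ℂ := by rw [hcommS]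
        _ = ⟪(A * B) (G v), G v⟫_ℂ := hsa.isSymmetric _ _
  rw [hTw]
  have : ((μ : ℂ) - (μ' : ℂ)) = ((μ - μ' : ℝ) : ℂ) := by push_cast; ring
  rw [this, Complex.re_ofReal_mul]
  have h1 : 0 < c * ‖G v‖ ^ 2 := mul_pos hc (pow_pos (norm_pos_iff.mpr hGv0) 2)
  exact mul_pos (by linarith) (lt_of_lt_of_le h1 (hkey (G v)))
end

section
/- Let H be a nonzero complex Hilbert space and G a bounded self-adjoint operator on H which is nonnegative (⟨Gw, w⟩ ≥ 0 for all w) and whose spectrum satisfies σ(G) ∩ (a, b) = ∅ for some 0 < a < b. Let μ ∈ (a, b). Then G − μ·I is invertible and for all w ∈ H: ⟨G²(G − μ)⁻¹ w, w⟩ ≥ (a/(a − μ)) · ⟨Gw, w⟩. (Note that a/(a − μ) < 0.) -/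
open scoped InnerProductSpace

/-- Spectral content of Lemma 13: for a nonnegative bounded self-adjoint operator `G`
whose spectrum avoids `(a,b)` with `0 < a < b`, and `μ ∈ (a,b)`, the operator `G − μ`
is invertible and `⟨G²(G−μ)⁻¹w, w⟩ ≥ (a/(a−μ))⟨Gw, w⟩` for all `w`. -/
theorem resolvent_quadratic_form_lower_bound
    {H : Type*} [NormedAddCommGroup H] [InnerProductSpace ℂ H] [CompleteSpace H]
    [Nontrivial H]
    (G : H →L[ℂ] H) (hsa : IsSelfAdjoint G)
    (hpos : ∀ w : H, 0 ≤ (⟪G w, w⟫_ℂ).re)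
    (a b : ℝ) (ha : 0 < a) (hab : a < b)
    (hgap : ∀ x : ℝ, x ∈ Set.Ioo a b → (x : ℂ) ∉ spectrum ℂ G)
    (μ : ℝ) (hμ : μ ∈ Set.Ioo a b) :
    IsUnit (G - (μ : ℂ) • (1 : H →L[ℂ] H)) ∧
    ∀ w : H,
      (a / (a - μ)) * (⟪G w, w⟫_ℂ).re ≤
        (⟪(G ^ 2 * Ring.inverse (G - (μ : ℂ) • 1)) w, w⟫_ℂ).re := by
  obtain ⟨hμa, hμb⟩ := hμ
  have hamu : a - μ < 0 := by linarith
  -- the spectrum of G (over ℝ) avoids (a, b)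
  have hgapR : ∀ x : ℝ, x ∈ spectrum ℝ G → x ∉ Set.Ioo a b := by
    intro x hx hx'
    exact hgap x hx' (by
      have := spectrum.algebraMap_mem (R := ℝ) (A := H →L[ℂ] H) ℂ hx
      simpa using this)
  -- spectrum is nonnegative
  have hGnn : (0 : H →L[ℂ] H) ≤ G := (ContinuousLinearMap.nonneg_iff_isPositive G).mpr
    ⟨ContinuousLinearMap.isSelfAdjoint_iff_isSymmetric.mp hsa, fun x => hpos x⟩
  have hspecnn : ∀ x ∈ spectrum ℝ G, (0:ℝ) ≤ x := fun x hx =>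
    spectrum_nonneg_of_nonneg hGnn hx
  -- x - μ ≠ 0 on the spectrum
  have hne : ∀ x ∈ spectrum ℝ G, x - μ ≠ 0 := by
    intro x hx h
    have : x = μ := by linarith
    exact hgapR x hx (this ▸ ⟨hμa, hμb⟩)
  -- cfc of (· - μ) is G - μ•1
  have hc1 : ContinuousOn (fun x : ℝ => x - μ) (spectrum ℝ G) :=
    (continuousOn_id.sub continuousOn_const)
  have hc2 : ContinuousOn (fun x : ℝ => (x - μ)⁻¹) (spectrum ℝ G) := hc1.inv₀ hne
  have hsub : cfc (fun x : ℝ => x - μ) G = G - (μ : ℂ) • 1 := by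
    rw [cfc_sub (fun x : ℝ => x) (fun _ : ℝ => μ) G continuousOn_id continuousOn_const,
      cfc_id' ℝ G, cfc_const μ G hsa]
    simp [Algebra.algebraMap_eq_smul_one, Complex.coe_smul]
  have hinv : cfc (fun x : ℝ => (x - μ)⁻¹) G = Ring.inverse (G - (μ : ℂ) • 1) := by
    rw [← hsub]
    exact cfc_inv (f := fun x : ℝ => x - μ) (a := G) hne hc1 hsa
  have hunit : IsUnit (G - (μ : ℂ) • (1 : H →L[ℂ] H)) := by
    have hμ' : (μ : ℂ) ∉ spectrum ℂ G := hgap μ ⟨hμa, hμb⟩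
    have := spectrum.notMem_iff.mp hμ'
    rw [Algebra.algebraMap_eq_smul_one] at this
    simpa [neg_sub] using this.neg
  refine ⟨hunit, fun w => ?_⟩
  -- key operator identity
  set c : ℝ := a / (a - μ) with hc
  have hcfc : cfc (fun x : ℝ => x ^ 2 * (x - μ)⁻¹ - c * x) G =
      G ^ 2 * Ring.inverse (G - (μ : ℂ) • 1) - c • G := by
    rw [cfc_sub (fun x : ℝ => x ^ 2 * (x - μ)⁻¹) (fun x : ℝ => c * x) G
      ((continuousOn_id.pow 2).mul hc2) (continuousOn_const.mul continuousOn_id),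
      cfc_mul (fun x : ℝ => x ^ 2) (fun x : ℝ => (x - μ)⁻¹) G
      (continuousOn_id.pow 2) hc2, hinv, cfc_const_mul_id c G hsa, cfc_pow_id (R := ℝ) G 2 hsa]
  -- pointwise nonnegativity on the spectrum
  have hptwise : ∀ x ∈ spectrum ℝ G, 0 ≤ x ^ 2 * (x - μ)⁻¹ - c * x := by
    intro x hx
    have hx0 : 0 ≤ x := hspecnn x hx
    have hgapx := hgapR x hx
    rcases le_or_gt x a with hxa | hxa
    · -- x ≤ a : both terms via explicit factorization
      have hxm : x - μ < 0 := by linarith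
      have key : x ^ 2 * (x - μ)⁻¹ - c * x =
          x * μ * (a - x) / ((x - μ) * (a - μ)) := by
        have h1 : x - μ ≠ 0 := ne_of_lt hxm
        have h2 : a - μ ≠ 0 := ne_of_lt hamu
        rw [hc]
        field_simp
        ring
      rw [key]
      apply div_nonneg
      · have hμ0 : 0 < μ := lt_trans ha hμa
        exact mul_nonneg (mul_nonneg hx0 hμ0.le) (by linarith)
      · exact le_of_lt (mul_pos_of_neg_of_neg hxm hamu)
    · -- x > a : then x ≥ b since spectrum avoids (a,b)
      have hxb : b ≤ x := by
        by_contra h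
        exact hgapx ⟨hxa, lt_of_not_ge h⟩
      have hxm : 0 < x - μ := by linarith
      have h1 : 0 ≤ x ^ 2 * (x - μ)⁻¹ :=
        mul_nonneg (sq_nonneg x) (le_of_lt (inv_pos.mpr hxm))
      have h2 : c * x ≤ 0 := mul_nonpos_of_nonpos_of_nonneg
        (le_of_lt (div_neg_of_pos_of_neg ha hamu)) hx0
      linarith
  have hTnn : (0 : H →L[ℂ] H) ≤
      G ^ 2 * Ring.inverse (G - (μ : ℂ) • 1) - c • G := by
    rw [← hcfc]
    exact cfc_nonneg hptwise
  have hP := ((ContinuousLinearMap.nonneg_iff_isPositive _).mp hTnn).re_inner_nonneg_left w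
  simp only [RCLike.re_to_complex] at hP
  have hre : (⟪((G ^ 2 * Ring.inverse (G - (μ : ℂ) • 1) - c • G)) w, w⟫_ℂ).re =
      (⟪(G ^ 2 * Ring.inverse (G - (μ : ℂ) • 1)) w, w⟫_ℂ).re - c * (⟪G w, w⟫_ℂ).re := by
    rw [ContinuousLinearMap.sub_apply, inner_sub_left, ContinuousLinearMap.smul_apply,
      ← Complex.coe_smul, inner_smul_left]
    simp [Complex.sub_re, Complex.conj_ofReal]
  rw [hre] at hP
  linarith
end
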